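/- Let X be a compact Hausdorff topological space and f : X → X a continuous map. Then every chain-recurrent point of f (with respect to the unique uniform structure inducing the topology of X) belongs to the limit set Ω(f) = ⋂_{n ≥ 1} f^n(X). -/

import Mathlib

open Set Filter Uniformity

lemma chain_shadow_key {X : Type*} [UniformSpace X] [CompactSpace X] (f : X → X)
    (hf : Continuous f) :
    ∀ n : ℕ, ∀ V ∈ uniformity X, ∃ E ∈ uniformity X,
      ∀ (m : ℕ) (c : ℕ → X), n ≤ m → (∀ i < m, (f (c i), c (i + 1)) ∈ E) →
        (f^[n] (c (m - n)), c m) ∈ V := by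
  intro n
  induction n with
  | zero =>
    intro V hV
    exact ⟨V, hV, fun m c _ _ => by simpa using refl_mem_uniformity hV⟩
  | succ n ih =>
    intro V hV
    obtain ⟨W, hW, hWV⟩ := comp_mem_uniformity_sets hV
    have hun : UniformContinuous f^[n] :=
      CompactSpace.uniformContinuous_of_continuous (hf.iterate n)
    have hE1 : {p : X × X | (f^[n] p.1, f^[n] p.2) ∈ W} ∈ uniformity X := hun hW
    obtain ⟨E2, hE2, hE2W⟩ := ih W hW
    refine ⟨_ ∩ E2, inter_mem hE1 hE2, fun m c hm hc => ?_⟩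
    have h1 : (f (c (m - n - 1)), c (m - n - 1 + 1)) ∈
        {p : X × X | (f^[n] p.1, f^[n] p.2) ∈ W} ∩ E2 := hc _ (by omega)
    have h2 : (f^[n] (c (m - n)), c m) ∈ W := hE2W m c (by omega) (fun i hi => (hc i hi).2)
    have heq : m - n - 1 + 1 = m - n := by omega
    have h1' : (f^[n] (f (c (m - n - 1))), f^[n] (c (m - n))) ∈ W := by
      have := h1.1; rw [heq] at this; exact this
    apply hWV
    have hms : m - (n + 1) = m - n - 1 := by omega
    rw [hms, Function.iterate_succ_apply]
    exact ⟨_, h1', h2⟩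

/-- On a compact Hausdorff space, every chain-recurrent point of a continuous self-map
(with respect to the unique compatible uniform structure) belongs to the limit set. -/
theorem chainRecurrent_subset_limitSet_of_compact {X : Type*} [UniformSpace X]
    [CompactSpace X] [T2Space X] (f : X → X) (hf : Continuous f) (x : X)
    (hx : ∀ E ∈ uniformity X, ∃ n ≥ 1, ∃ c : ℕ → X,
      c 0 = x ∧ c n = x ∧ ∀ i < n, (f (c i), c (i + 1)) ∈ E) :
    x ∈ ⋂ n ≥ 1, Set.range f^[n] := by
  simp only [Set.mem_iInter]
  intro n _
  have hcl : IsClosed (Set.range f^[n]) := (isCompact_range (hf.iterate n)).isClosed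
  rw [← hcl.closure_eq, UniformSpace.mem_closure_iff_ball]
  intro V hV
  obtain ⟨V', hV', hsymm, hV'V⟩ := symm_of_uniformity hV
  obtain ⟨E, hE, hEkey⟩ := chain_shadow_key f hf n V' hV'
  obtain ⟨m, hm1, c, hc0, hcm, hc⟩ := hx E hE
  -- concatenated chain
  set c' : ℕ → X := fun i => c (i % m) with hc'
  have hmpos : 0 < m := hm1
  have hchain : ∀ i < (n + 1) * m, (f (c' i), c' (i + 1)) ∈ E := by
    intro i _
    have him : i % m < m := Nat.mod_lt _ hmpos
    have hnext : c' (i + 1) = c (i % m + 1) := by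
      show c ((i + 1) % m) = c (i % m + 1)
      have hmm : (i % m + 1) % m = (i + 1) % m := Nat.mod_add_mod i m 1
      rcases lt_or_ge (i % m + 1) m with h | h
      · rw [← hmm, Nat.mod_eq_of_lt h]
      · have : i % m + 1 = m := by omega
        rw [← hmm, this, Nat.mod_self, hc0, ← hcm]
    rw [hnext]
    exact hc _ him
  have hlen : n ≤ (n + 1) * m := by nlinarith
  have hkey := hEkey ((n + 1) * m) c' hlen hchain
  have hend : c' ((n + 1) * m) = x := by
    show c ((n + 1) * m % m) = x
    rw [Nat.mul_mod_left, hc0]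
  rw [hend] at hkey
  refine ⟨f^[n] (c' ((n + 1) * m - n)), hV'V (hsymm.symm _ _ hkey), Set.mem_range_self _⟩
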